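/- Let K be a nonempty closed subset of ℝⁿ. There exists a Borel measurable map pr : ℝⁿ → ℝⁿ such that for every y ∈ ℝⁿ, pr(y) ∈ K and ‖y − pr(y)‖₂ = inf_{x ∈ K} ‖y − x‖₂, i.e. pr is a measurable selection of the metric projection onto K. -/

import Mathlib

open MeasureTheory Metric Filter Topology

namespace MetricProjSel

variable {E : Type*} [MetricSpace E]

/-- Index set at a given stage: indices `k` such that `e k` is within `ε` of some
nearest point of `y` in `K`, and within `3 * ε` of the previous point `p` (if any). -/
def idxSet (K : Set E) (e : ℕ → E) (y : E) (ε : ℝ) (p : Option E) : Set ℕ :=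
  {k | (∃ s ∈ K, dist y s = infDist y K ∧ dist (e k) s ≤ ε) ∧
       ∀ q ∈ p, dist (e k) q ≤ 3 * ε}

/-- The approximating sequence of measurable selections. -/
noncomputable def g (K : Set E) (e : ℕ → E) : ℕ → E → E
  | 0 => fun y => e (sInf (idxSet K e y 1 none))
  | (m + 1) => fun y =>
      e (sInf (idxSet K e y ((2 : ℝ)⁻¹ ^ (m + 1)) (some (g K e m y))))

variable {K : Set E} {e : ℕ → E}

lemma closed_aux [ProperSpace E] (hcl : IsClosed K) (x : E) (ε : ℝ) :
    IsClosed {y : E | ∃ s ∈ K, dist y s = infDist y K ∧ dist x s ≤ ε} := by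
  apply IsSeqClosed.isClosed
  intro u y hu hlim
  choose s hsK hsd hsx using hu
  have hC : IsCompact (K ∩ closedBall x ε) :=
    (isCompact_closedBall x ε).inter_left hcl
  obtain ⟨l, hlC, φ, hφ, hφlim⟩ :=
    hC.tendsto_subseq (x := s)
      (fun j => ⟨hsK j, by simpa [mem_closedBall, dist_comm] using hsx j⟩)
  refine ⟨l, hlC.1, ?_, by simpa [mem_closedBall, dist_comm] using hlC.2⟩
  have h1 : Tendsto (fun j => dist (u (φ j)) (s (φ j))) atTop (𝓝 (dist y l)) :=
    ((hlim.comp hφ.tendsto_atTop).dist hφlim)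
  have h2 : Tendsto (fun j => infDist (u (φ j)) K) atTop (𝓝 (infDist y K)) :=
    ((continuous_infDist_pt K).tendsto y).comp (hlim.comp hφ.tendsto_atTop)
  have heq : (fun j => dist (u (φ j)) (s (φ j))) = fun j => infDist (u (φ j)) K := by
    funext j; exact hsd (φ j)
  rw [heq] at h1
  exact tendsto_nhds_unique h1 h2

/-- Invariant: the index set at each stage is nonempty and the chosen point is
`2⁻¹ ^ m`-close to some nearest point. -/
lemma invariant [ProperSpace E] (hcl : IsClosed K) (hne : K.Nonempty)
    (he : ∀ s ∈ K, ∀ ε : ℝ, 0 < ε → ∃ k, dist (e k) s ≤ ε) :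
    ∀ m y, ∃ s ∈ K, dist y s = infDist y K ∧ dist (g K e m y) s ≤ (2 : ℝ)⁻¹ ^ m := by
  intro m
  induction m with
  | zero =>
    intro y
    obtain ⟨s, hsK, hsd⟩ := hcl.exists_infDist_eq_dist hne y
    obtain ⟨k, hk⟩ := he s hsK 1 one_pos
    have hnonempty : (idxSet K e y 1 none).Nonempty :=
      ⟨k, ⟨s, hsK, hsd.symm, hk⟩, by simp⟩
    obtain ⟨⟨s', hs'K, hs'd, hs'⟩, -⟩ := Nat.sInf_mem hnonempty
    exact ⟨s', hs'K, hs'd, by simpa [g] using hs'⟩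
  | succ m ih =>
    intro y
    obtain ⟨s, hsK, hsd, hs⟩ := ih y
    obtain ⟨k, hk⟩ := he s hsK ((2 : ℝ)⁻¹ ^ (m + 1)) (by positivity)
    have hprev : dist (e k) (g K e m y) ≤ 3 * (2 : ℝ)⁻¹ ^ (m + 1) := by
      calc dist (e k) (g K e m y) ≤ dist (e k) s + dist s (g K e m y) := dist_triangle _ _ _
        _ ≤ (2 : ℝ)⁻¹ ^ (m + 1) + (2 : ℝ)⁻¹ ^ m := by
            rw [dist_comm s]; exact add_le_add hk hs
        _ = 3 * (2 : ℝ)⁻¹ ^ (m + 1) := by ring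
    have hnonempty : (idxSet K e y ((2 : ℝ)⁻¹ ^ (m + 1)) (some (g K e m y))).Nonempty :=
      ⟨k, ⟨s, hsK, hsd, hk⟩, by simpa using hprev⟩
    obtain ⟨⟨s', hs'K, hs'd, hs'⟩, -⟩ := Nat.sInf_mem hnonempty
    exact ⟨s', hs'K, hs'd, by simpa [g] using hs'⟩

/-- Consecutive terms are geometrically close. -/
lemma consec [ProperSpace E] (hcl : IsClosed K) (hne : K.Nonempty)
    (he : ∀ s ∈ K, ∀ ε : ℝ, 0 < ε → ∃ k, dist (e k) s ≤ ε) :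
    ∀ m y, dist (g K e m y) (g K e (m + 1) y) ≤ 3 * (2 : ℝ)⁻¹ ^ (m + 1) := by
  intro m y
  obtain ⟨s, hsK, hsd, hs⟩ := invariant hcl hne he m y
  obtain ⟨k, hk⟩ := he s hsK ((2 : ℝ)⁻¹ ^ (m + 1)) (by positivity)
  have hprev : dist (e k) (g K e m y) ≤ 3 * (2 : ℝ)⁻¹ ^ (m + 1) := by
    calc dist (e k) (g K e m y) ≤ dist (e k) s + dist s (g K e m y) := dist_triangle _ _ _
      _ ≤ (2 : ℝ)⁻¹ ^ (m + 1) + (2 : ℝ)⁻¹ ^ m := by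
          rw [dist_comm s]; exact add_le_add hk hs
      _ = 3 * (2 : ℝ)⁻¹ ^ (m + 1) := by ring
  have hnonempty : (idxSet K e y ((2 : ℝ)⁻¹ ^ (m + 1)) (some (g K e m y))).Nonempty :=
    ⟨k, ⟨s, hsK, hsd, hk⟩, by simpa using hprev⟩
  obtain ⟨-, h2⟩ := Nat.sInf_mem hnonempty
  have := h2 (g K e m y) rfl
  rw [dist_comm]
  simpa [g] using this

lemma meas_sInf {α : Type*} [MeasurableSpace α] {S : α → Set ℕ}
    (hne : ∀ y, (S y).Nonempty) (h : ∀ k, MeasurableSet {y | k ∈ S y}) :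
    Measurable fun y => sInf (S y) := by
  apply measurable_to_countable'
  intro k
  have : (fun y => sInf (S y)) ⁻¹' {k}
      = {y | k ∈ S y} ∩ ⋂ j ∈ Finset.range k, {y | j ∈ S y}ᶜ := by
    ext y
    simp only [Set.mem_preimage, Set.mem_singleton_iff, Set.mem_inter_iff,
      Set.mem_iInter, Set.mem_compl_iff, Set.mem_setOf_eq, Finset.mem_range]
    constructor
    · rintro rfl
      exact ⟨Nat.sInf_mem (hne y), fun j hj => Nat.notMem_of_lt_sInf hj⟩
    · rintro ⟨h1, h2⟩
      exact le_antisymm (Nat.sInf_le h1)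
        (le_of_not_gt fun hlt => h2 _ hlt (Nat.sInf_mem (hne y)))
  rw [this]
  exact (h k).inter (MeasurableSet.biInter (Set.to_countable _)
    (fun j _ => (h j).compl))

lemma g_measurable [ProperSpace E] [MeasurableSpace E] [BorelSpace E]
    (hcl : IsClosed K) (hne : K.Nonempty)
    (he : ∀ s ∈ K, ∀ ε : ℝ, 0 < ε → ∃ k, dist (e k) s ≤ ε) :
    ∀ m, Measurable (g K e m) := by
  intro m
  induction m with
  | zero =>
    apply measurable_from_nat.comp
    apply meas_sInf
    · intro y
      obtain ⟨s, hsK, hsd⟩ := hcl.exists_infDist_eq_dist hne y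
      obtain ⟨k, hk⟩ := he s hsK 1 one_pos
      exact ⟨k, ⟨s, hsK, hsd.symm, hk⟩, by simp⟩
    · intro k
      have : {y : E | k ∈ idxSet K e y 1 none}
          = {y : E | ∃ s ∈ K, dist y s = infDist y K ∧ dist (e k) s ≤ 1} := by
        ext y; simp [idxSet]
      rw [this]
      exact (closed_aux hcl (e k) 1).measurableSet
  | succ m ih =>
    show Measurable fun y =>
      e (sInf (idxSet K e y ((2 : ℝ)⁻¹ ^ (m + 1)) (some (g K e m y))))
    apply measurable_from_nat.comp
    apply meas_sInf
    · intro y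
      obtain ⟨s, hsK, hsd, hs⟩ := invariant hcl hne he m y
      obtain ⟨k, hk⟩ := he s hsK ((2 : ℝ)⁻¹ ^ (m + 1)) (by positivity)
      refine ⟨k, ⟨s, hsK, hsd, hk⟩, ?_⟩
      intro q hq
      cases hq
      calc dist (e k) (g K e m y) ≤ dist (e k) s + dist s (g K e m y) := dist_triangle _ _ _
        _ ≤ (2 : ℝ)⁻¹ ^ (m + 1) + (2 : ℝ)⁻¹ ^ m := by
            rw [dist_comm s]; exact add_le_add hk hs
        _ = 3 * (2 : ℝ)⁻¹ ^ (m + 1) := by ring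
    · intro k
      have : {y : E | k ∈ idxSet K e y ((2 : ℝ)⁻¹ ^ (m + 1)) (some (g K e m y))}
          = {y : E | ∃ s ∈ K, dist y s = infDist y K ∧ dist (e k) s ≤ (2 : ℝ)⁻¹ ^ (m + 1)}
            ∩ (g K e m) ⁻¹' (closedBall (e k) (3 * (2 : ℝ)⁻¹ ^ (m + 1))) := by
        ext y
        simp [idxSet, mem_closedBall, dist_comm]
      rw [this]
      exact ((closed_aux hcl (e k) _).measurableSet).inter
        (ih (isClosed_closedBall.measurableSet))

end MetricProjSel

/-- **Existence of a Borel measurable selection of the metric projection.**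
For a nonempty closed set `K ⊆ ℝⁿ` there is a Borel measurable map `pr` such that
for every `y`, `pr y ∈ K` and `‖y - pr y‖ = inf_{x ∈ K} ‖y - x‖`. -/
theorem measurable_selection_of_metric_projection
    (n : ℕ) (K : Set (EuclideanSpace ℝ (Fin n)))
    (hne : K.Nonempty) (hcl : IsClosed K) :
    ∃ pr : EuclideanSpace ℝ (Fin n) → EuclideanSpace ℝ (Fin n),
      Measurable pr ∧ ∀ y, pr y ∈ K ∧ dist y (pr y) = infDist y K := by
  haveI : Nonempty K := hne.to_subtype
  set e : ℕ → EuclideanSpace ℝ (Fin n) :=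
    fun k => (TopologicalSpace.denseSeq K k : EuclideanSpace ℝ (Fin n)) with he_def
  have he : ∀ s ∈ K, ∀ ε : ℝ, 0 < ε → ∃ k, dist (e k) s ≤ ε := by
    intro s hs ε hε
    obtain ⟨k, hk⟩ :=
      (TopologicalSpace.denseRange_denseSeq K).exists_dist_lt ⟨s, hs⟩ hε
    refine ⟨k, ?_⟩
    rw [dist_comm]
    simpa [Subtype.dist_eq] using hk.le
  -- Cauchy
  have key : ∀ y, CauchySeq (fun m => MetricProjSel.g K e m y) := by
    intro y
    apply cauchySeq_of_le_geometric (2 : ℝ)⁻¹ (3 / 2) (by norm_num)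
    intro m
    calc dist (MetricProjSel.g K e m y) (MetricProjSel.g K e (m + 1) y)
        ≤ 3 * (2 : ℝ)⁻¹ ^ (m + 1) := MetricProjSel.consec hcl hne he m y
      _ = (3 / 2) * (2 : ℝ)⁻¹ ^ m := by ring
  have hlim : ∀ y, ∃ l, Filter.Tendsto (fun m => MetricProjSel.g K e m y)
      Filter.atTop (nhds l) := fun y => cauchySeq_tendsto_of_complete (key y)
  choose pr hpr using hlim
  have hhalf : Filter.Tendsto (fun m : ℕ => (2 : ℝ)⁻¹ ^ m) Filter.atTop (nhds 0) :=
    tendsto_pow_atTop_nhds_zero_of_lt_one (by norm_num) (by norm_num)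
  refine ⟨pr, ?_, ?_⟩
  · apply measurable_of_tendsto_metrizable (f := fun m y => MetricProjSel.g K e m y)
      (fun m => MetricProjSel.g_measurable hcl hne he m)
    rw [tendsto_pi_nhds]
    exact hpr
  · intro y
    have hinv := fun m => MetricProjSel.invariant hcl hne he m y
    choose s hsK hsd hs using hinv
    have h0 : Filter.Tendsto (fun m => infDist (MetricProjSel.g K e m y) K)
        Filter.atTop (nhds 0) :=
      squeeze_zero (fun m => infDist_nonneg)
        (fun m => le_trans (infDist_le_dist_of_mem (hsK m)) (hs m)) hhalf
    have h0' : Filter.Tendsto (fun m => infDist (MetricProjSel.g K e m y) K)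
        Filter.atTop (nhds (infDist (pr y) K)) :=
      ((continuous_infDist_pt K).tendsto _).comp (hpr y)
    have hmem : pr y ∈ K := by
      rw [hcl.mem_iff_infDist_zero hne]
      exact tendsto_nhds_unique h0' h0
    refine ⟨hmem, ?_⟩
    have hd1 : Filter.Tendsto (fun m => dist y (MetricProjSel.g K e m y))
        Filter.atTop (nhds (dist y (pr y))) :=
      tendsto_const_nhds.dist (hpr y)
    have hd2 : Filter.Tendsto (fun m => dist y (MetricProjSel.g K e m y))
        Filter.atTop (nhds (infDist y K)) := by
      have hb : ∀ m, ‖dist y (MetricProjSel.g K e m y) - infDist y K‖ ≤ (2 : ℝ)⁻¹ ^ m := by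
        intro m
        rw [Real.norm_eq_abs]
        have h1 : |dist (MetricProjSel.g K e m y) y - dist (s m) y|
            ≤ dist (MetricProjSel.g K e m y) (s m) := abs_dist_sub_le _ _ _
        rw [dist_comm (MetricProjSel.g K e m y) y, dist_comm (s m) y, hsd m] at h1
        exact h1.trans (hs m)
      have hz := squeeze_zero_norm hb hhalf
      have := hz.add_const (infDist y K)
      simpa using this
    exact tendsto_nhds_unique hd1 hd2
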